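/- Let χ be a right action of PSL₂(L) on L(z) satisfying the G(L)-property, let K be a subfield of L, and R ∈ L(z). Then K is a χ-field of definition of R if and only if there exists T ∈ PSL₂(L) such that for every σ ∈ G(L/K) one has R^σ = χ(T^{-1} ∘ T^σ)(R) (existence of a χ-coboundary for R with respect to L/K). -/

import Mathlib

open Polynomial

noncomputable section

variable {L : Type*} [Field L]

/-- `SL₂(L)`. -/
abbrev SL2 (L : Type*) [Field L] := Matrix.SpecialLinearGroup (Fin 2) L

/-- The entrywise action of a field automorphism on `SL₂(L)`. -/
def SL2.mapAut (σ : L ≃+* L) : SL2 L →* SL2 L :=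
  Matrix.SpecialLinearGroup.map (σ : L →+* L)

/-- `PSL₂(L)`, the Möbius group over the algebraically closed field `L`. -/
abbrev PSL2 (L : Type*) [Field L] := SL2 L ⧸ Subgroup.center (SL2 L)

/-- The action `T ↦ T^σ` of a field automorphism on `PSL₂(L)`. -/
def PSL2.mapAut (σ : L ≃+* L) : PSL2 L →* PSL2 L :=
  QuotientGroup.map _ _ (SL2.mapAut σ) (by
    intro A hA
    rw [Subgroup.mem_comap]
    rw [Subgroup.mem_center_iff] at hA ⊢
    intro B
    have hB : SL2.mapAut σ (SL2.mapAut σ.symm B) = B := by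
      ext i j
      simp [SL2.mapAut, Matrix.SpecialLinearGroup.map_apply_coe]
    rw [← hB, ← map_mul, ← map_mul, hA])

/-- The coefficientwise action `R ↦ R^σ` of a field automorphism on rational maps. -/
def galR (σ : L ≃+* L) (R : RatFunc L) : RatFunc L :=
  algebraMap (Polynomial L) (RatFunc L) (R.num.map (σ : L →+* L)) /
    algebraMap (Polynomial L) (RatFunc L) (R.denom.map (σ : L →+* L))

/-- `S ∈ K(z)`: all coefficients of the normalized numerator and denominator lie in `K`. -/
def definedOver (K : Subfield L) (S : RatFunc L) : Prop :=
  (∀ n, S.num.coeff n ∈ K) ∧ (∀ n, S.denom.coeff n ∈ K)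

/-- Weil-type criterion: for a right action `χ` with the `G(L)`-property and a subfield
`K` of `L` (rational maps being written in normalized form, so that a rational map fixed
coefficientwise by all of `G(L/K)` lies in `K(z)`), `K` is a χ-field of definition of `R`
iff there is a χ-coboundary: some `T ∈ PSL₂(L)` with `R^σ = χ(T⁻¹ ∘ T^σ)(R)` for every
`σ ∈ G(L/K)`. -/

lemma galR_fixed (K : Subfield L) (S : RatFunc L) (hS : definedOver K S)
    (σ : RingAut L) (hσ : ∀ x ∈ K, σ x = x) : galR σ S = S := by
  have h1 : S.num.map (σ : L →+* L) = S.num := by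
    ext n; rw [Polynomial.coeff_map]; exact hσ _ (hS.1 n)
  have h2 : S.denom.map (σ : L →+* L) = S.denom := by
    ext n; rw [Polynomial.coeff_map]; exact hσ _ (hS.2 n)
  rw [galR, h1, h2, RatFunc.num_div_denom]

theorem stmt3 [IsAlgClosed L]
    (χ : PSL2 L → RatFunc L → RatFunc L)
    (hid : ∀ R : RatFunc L, χ 1 R = R)
    (hact : ∀ (A B : PSL2 L) (R : RatFunc L), χ (A * B) R = χ B (χ A R))
    (hGal : ∀ (σ : RingAut L) (T : PSL2 L) (R : RatFunc L),
      galR σ (χ T R) = χ (PSL2.mapAut σ T) (galR σ R))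
    (K : Subfield L)
    (hfix : ∀ S : RatFunc L,
      (∀ σ : RingAut L, (∀ x ∈ K, σ x = x) → galR σ S = S) → definedOver K S)
    (R : RatFunc L) :
    (∃ S : RatFunc L, definedOver K S ∧ ∃ T : PSL2 L, S = χ T R) ↔
      (∃ T : PSL2 L, ∀ σ : RingAut L, (∀ x ∈ K, σ x = x) →
        galR σ R = χ (T⁻¹ * PSL2.mapAut σ T) R) := by
  constructor
  · rintro ⟨S, hS, T, rfl⟩
    refine ⟨T⁻¹, fun σ hσ => ?_⟩
    have h := galR_fixed K _ hS σ hσ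
    rw [hGal] at h
    have := congrArg (χ (PSL2.mapAut σ T)⁻¹) h
    rw [← hact, ← hact, mul_inv_cancel, hid] at this
    rw [this, inv_inv, map_inv]
  · rintro ⟨T, hT⟩
    refine ⟨χ T⁻¹ R, hfix _ fun σ hσ => ?_, T⁻¹, rfl⟩
    rw [hGal, hT σ hσ, ← hact, map_inv, mul_assoc, mul_inv_cancel, mul_one]
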